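/- Let n, p ∈ ℕ, x₁,…,xₙ ∈ ℝᵖ, s₁,…,sₙ ≥ 0, m₁,…,mₙ ≥ 0, y₁,…,yₙ ∈ ℝ, uᵢ = yᵢ − mᵢ/2, and P : ℝᵖ → ℝ. Fix βₜ ∈ ℝᵖ, suppose β′ maximizes Q(β) = Σᵢ sᵢ uᵢ xᵢᵀβ − (1/2) Σᵢ sᵢ ω(xᵢᵀβₜ, mᵢ)(xᵢᵀβ)² − P(β) over β ∈ ℝᵖ, and suppose ρ′ ∈ ℝ maximizes ρ ↦ pℓ(ρ·β′) over ℝ. Then pℓ(ρ′·β′) ≥ pℓ(β′) ≥ pℓ(βₜ). That is, the PX-ECME update (EM update followed by an optimal scalar rescaling) increases the penalized weighted log-likelihood at every iteration. -/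

import Mathlib

open Matrix Real Set

/-- The Pólya-Gamma EM weight function: ω(t,m) = (m/(2t))·tanh(t/2) for t ≠ 0,
and ω(0,m) = m/4. -/
noncomputable def omegaPG (t m : ℝ) : ℝ :=
  if t = 0 then m / 4 else m / (2 * t) * Real.tanh (t / 2)


lemma self_le_sinh_mul_cosh {a : ℝ} (ha : 0 ≤ a) : a ≤ Real.sinh a * Real.cosh a := by
  have h := (Real.self_le_sinh_iff (x := 2*a)).2 (by linarith)
  rw [Real.sinh_two_mul] at h
  linarith

lemma hasDerivAt_tanh (x : ℝ) : HasDerivAt Real.tanh (1 / Real.cosh x ^ 2) x := by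
  have h := (Real.hasDerivAt_sinh x).div (Real.hasDerivAt_cosh x) (Real.cosh_pos x).ne'
  have he : (Real.cosh x * Real.cosh x - Real.sinh x * Real.sinh x) / Real.cosh x ^ 2
      = 1 / Real.cosh x ^ 2 := by
    have := Real.cosh_sq x
    field_simp
    nlinarith [Real.cosh_sq x]
  rw [he] at h
  have : (fun y => Real.sinh y / Real.cosh y) = Real.tanh := by
    funext y; rw [Real.tanh_eq_sinh_div_cosh]
  rw [← this]; exact h

lemma hasDerivAt_log_cosh (x : ℝ) :
    HasDerivAt (fun y => Real.log (Real.cosh y)) (Real.tanh x) x := by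
  have h := (Real.hasDerivAt_cosh x).log (Real.cosh_pos x).ne'
  rwa [← Real.tanh_eq_sinh_div_cosh] at h

lemma tanh_le_self {a : ℝ} (ha : 0 ≤ a) : Real.tanh a ≤ a := by
  have key : Real.sinh a ≤ a * Real.cosh a := by
    have hd : ∀ x : ℝ, HasDerivAt (fun x => x * Real.cosh x - Real.sinh x)
        (1 * Real.cosh x + x * Real.sinh x - Real.cosh x) x := fun x =>
      ((hasDerivAt_id x).mul (Real.hasDerivAt_cosh x)).sub (Real.hasDerivAt_sinh x)
    have hmono : MonotoneOn (fun x => x * Real.cosh x - Real.sinh x) (Ici (0:ℝ)) := by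
      apply monotoneOn_of_deriv_nonneg (convex_Ici 0)
      · exact ((continuous_id.mul Real.continuous_cosh).sub Real.continuous_sinh).continuousOn
      · exact fun x _ => (hd x).differentiableAt.differentiableWithinAt
      · intro x hx
        rw [(hd x).deriv]
        rw [interior_Ici, mem_Ioi] at hx
        have : 0 ≤ Real.sinh x := Real.sinh_nonneg_iff.2 hx.le
        nlinarith
    have := hmono (self_mem_Ici) (mem_Ici.2 ha) ha
    simp at this
    linarith
  rw [Real.tanh_eq_sinh_div_cosh, div_le_iff₀ (Real.cosh_pos a)]
  linarith

lemma tanh_cross {b a : ℝ} (hb : 0 < b) (hba : b ≤ a) :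
    b * Real.tanh a ≤ a * Real.tanh b := by
  have hd : ∀ x : ℝ, HasDerivAt (fun x => x * Real.tanh b - b * Real.tanh x)
      (1 * Real.tanh b + x * 0 - b * (1 / Real.cosh x ^ 2)) x := fun x =>
    (((hasDerivAt_id x).mul (hasDerivAt_const x _)).sub ((hasDerivAt_tanh x).const_mul b))
  have hmono : MonotoneOn (fun x => x * Real.tanh b - b * Real.tanh x) (Ici b) := by
    apply monotoneOn_of_deriv_nonneg (convex_Ici b)
    · exact fun x _ => (hd x).differentiableAt.continuousAt.continuousWithinAt
    · exact fun x _ => (hd x).differentiableAt.differentiableWithinAt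
    · intro x hx
      rw [interior_Ici, mem_Ioi] at hx
      rw [(hd x).deriv]
      have hcb : (0:ℝ) < Real.cosh b ^ 2 := by positivity
      have hcx : (0:ℝ) < Real.cosh x ^ 2 := by positivity
      have hmon : Real.cosh b ^ 2 ≤ Real.cosh x ^ 2 := by
        have : Real.cosh b ≤ Real.cosh x := by
          rw [Real.cosh_le_cosh, abs_of_nonneg hb.le, abs_of_nonneg (hb.le.trans hx.le)]
          exact hx.le
        nlinarith [Real.cosh_pos b, Real.cosh_pos x]
      have h1 : b / Real.cosh x ^ 2 ≤ b / Real.cosh b ^ 2 :=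
        div_le_div_of_nonneg_left hb.le hcb hmon
      have h2 : b / Real.cosh b ^ 2 ≤ Real.tanh b := by
        rw [div_le_iff₀ hcb]
        have heq : Real.tanh b * Real.cosh b ^ 2 = Real.sinh b * Real.cosh b := by
          rw [Real.tanh_eq_sinh_div_cosh]
          field_simp
        rw [heq]
        exact self_le_sinh_mul_cosh hb.le
      have : b * (1 / Real.cosh x ^ 2) = b / Real.cosh x ^ 2 := by ring
      rw [this]
      linarith
  have := hmono (self_mem_Ici) (mem_Ici.2 hba) hba
  simp only [sub_le_sub_iff] at this
  nlinarith [this]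

lemma log_cosh_le_sq_half {a : ℝ} (ha : 0 ≤ a) : Real.log (Real.cosh a) ≤ a ^ 2 / 2 := by
  have hd : ∀ x : ℝ, HasDerivAt (fun x => x ^ 2 / 2 - Real.log (Real.cosh x))
      (x - Real.tanh x) x := by
    intro x
    have h1 : HasDerivAt (fun x : ℝ => x ^ 2 / 2) x x := by
      have := ((hasDerivAt_pow 2 x).div_const 2)
      simpa using this.congr_deriv (by push_cast; ring)
    exact h1.sub (hasDerivAt_log_cosh x)
  have hmono : MonotoneOn (fun x => x ^ 2 / 2 - Real.log (Real.cosh x)) (Ici (0:ℝ)) := by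
    apply monotoneOn_of_deriv_nonneg (convex_Ici 0)
    · exact fun x _ => (hd x).differentiableAt.continuousAt.continuousWithinAt
    · exact fun x _ => (hd x).differentiableAt.differentiableWithinAt
    · intro x hx
      rw [interior_Ici, mem_Ioi] at hx
      rw [(hd x).deriv]
      linarith [tanh_le_self hx.le]
  have := hmono (self_mem_Ici) (mem_Ici.2 ha) ha
  simp [Real.cosh_zero] at this
  linarith

lemma log_cosh_bound_pos {a b : ℝ} (ha : 0 ≤ a) (hb : 0 < b) :
    Real.log (Real.cosh a) ≤ Real.log (Real.cosh b)
      + Real.tanh b / (2 * b) * (a ^ 2 - b ^ 2) := by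
  set lam := Real.tanh b / (2 * b) with hlam
  have hd : ∀ x : ℝ, HasDerivAt (fun x => lam * x ^ 2 - Real.log (Real.cosh x))
      (lam * (2 * x) - Real.tanh x) x := by
    intro x
    have h1 : HasDerivAt (fun x : ℝ => lam * x ^ 2) (lam * (2 * x)) x := by
      have := (hasDerivAt_pow 2 x).const_mul lam
      simpa using this.congr_deriv (by push_cast; ring)
    exact h1.sub (hasDerivAt_log_cosh x)
  have key : lam * b ^ 2 - Real.log (Real.cosh b) ≤ lam * a ^ 2 - Real.log (Real.cosh a) := by
    rcases le_or_gt b a with hba | hab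
    · -- monotone on [b, ∞)
      have hmono : MonotoneOn (fun x => lam * x ^ 2 - Real.log (Real.cosh x)) (Ici b) := by
        apply monotoneOn_of_deriv_nonneg (convex_Ici b)
        · exact fun x _ => (hd x).differentiableAt.continuousAt.continuousWithinAt
        · exact fun x _ => (hd x).differentiableAt.differentiableWithinAt
        · intro x hx
          rw [interior_Ici, mem_Ioi] at hx
          rw [(hd x).deriv]
          have hc := tanh_cross hb hx.le
          have : Real.tanh x ≤ x * Real.tanh b / b := by
            rw [le_div_iff₀ hb]; nlinarith
          rw [hlam]
          have hb' : (2:ℝ) * b > 0 := by linarith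
          rw [div_mul_eq_mul_div, sub_nonneg]
          calc Real.tanh x ≤ x * Real.tanh b / b := this
            _ = Real.tanh b * (2 * x) / (2 * b) := by field_simp
      exact hmono (self_mem_Ici) (mem_Ici.2 hba) hba
    · -- antitone on [0, b]
      have hanti : AntitoneOn (fun x => lam * x ^ 2 - Real.log (Real.cosh x)) (Icc 0 b) := by
        apply antitoneOn_of_deriv_nonpos (convex_Icc 0 b)
        · exact fun x _ => (hd x).differentiableAt.continuousAt.continuousWithinAt
        · exact fun x _ => (hd x).differentiableAt.differentiableWithinAt
        · intro x hx
          rw [interior_Icc, mem_Ioo] at hx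
          rw [(hd x).deriv]
          have hc := tanh_cross hx.1 hx.2.le
          rw [hlam, sub_nonpos, div_mul_eq_mul_div, div_le_iff₀ (by linarith : (0:ℝ) < 2 * b)]
          nlinarith
      exact hanti (mem_Icc.2 ⟨ha, hab.le⟩) (mem_Icc.2 ⟨le_trans ha hab.le, le_refl b⟩) hab.le
  linarith

/-- the full bound, all reals -/
lemma log_cosh_bound (a b : ℝ) :
    Real.log (Real.cosh a) ≤ Real.log (Real.cosh b)
      + (if b = 0 then (1/2:ℝ) else Real.tanh b / (2 * b)) * (a ^ 2 - b ^ 2) := by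
  have hca : Real.cosh a = Real.cosh |a| := (Real.cosh_abs a).symm
  have hcb : Real.cosh b = Real.cosh |b| := (Real.cosh_abs b).symm
  have hsa : a ^ 2 = |a| ^ 2 := (sq_abs a).symm
  have hsb : b ^ 2 = |b| ^ 2 := (sq_abs b).symm
  rcases eq_or_ne b 0 with hb0 | hb0
  · subst hb0
    simp only [if_pos rfl]
    have := log_cosh_le_sq_half (abs_nonneg a)
    rw [← hca, ← hsa] at this
    simp [Real.cosh_zero]
    linarith
  · have hlameq : Real.tanh |b| / (2 * |b|) = Real.tanh b / (2 * b) := by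
      rcases abs_cases b with ⟨h, _⟩ | ⟨h, _⟩
      · rw [h]
      · rw [h, Real.tanh_neg]; rw [mul_neg, div_neg, neg_div, neg_neg]
    have hbpos : 0 < |b| := abs_pos.2 hb0
    have := log_cosh_bound_pos (abs_nonneg a) hbpos
    rw [hlameq] at this
    rw [if_neg hb0, hca, hcb, hsa, hsb]
    exact this


lemma omegaPG_eq_mul (t m : ℝ) : omegaPG t m = m * omegaPG t 1 := by
  unfold omegaPG
  split_ifs <;> ring

lemma one_add_exp_eq (t : ℝ) :
    1 + Real.exp t = Real.exp (t / 2) * (2 * Real.cosh (t / 2)) := by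
  rw [Real.cosh_eq]
  have h1 : Real.exp (t/2) * Real.exp (t/2) = Real.exp t := by
    rw [← Real.exp_add]; ring_nf
  have h2 : Real.exp (t/2) * Real.exp (-(t/2)) = 1 := by
    rw [← Real.exp_add]; simp
  nlinarith [h1, h2]

lemma log_one_add_exp (t : ℝ) :
    Real.log (1 + Real.exp t) = t / 2 + Real.log 2 + Real.log (Real.cosh (t / 2)) := by
  rw [one_add_exp_eq, Real.log_mul (Real.exp_ne_zero _) (by positivity),
    Real.log_exp, Real.log_mul (by norm_num) (Real.cosh_pos _).ne']
  ring

lemma logistic_bound (t t0 : ℝ) :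
    Real.log (1 + Real.exp t) ≤ Real.log (1 + Real.exp t0) + (t - t0) / 2
      + omegaPG t0 1 / 2 * (t ^ 2 - t0 ^ 2) := by
  have h := log_cosh_bound (t / 2) (t0 / 2)
  rw [log_one_add_exp, log_one_add_exp]
  rcases eq_or_ne t0 0 with h0 | h0
  · subst h0
    rw [if_pos (by norm_num : (0:ℝ)/2 = 0)] at h
    unfold omegaPG
    rw [if_pos rfl]
    norm_num
    norm_num at h
    nlinarith [h]
  · rw [if_neg (by simpa using h0 : (t0:ℝ)/2 ≠ 0)] at h
    unfold omegaPG
    rw [if_neg h0]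
    have h2 : Real.tanh (t0 / 2) / (2 * (t0 / 2)) * ((t/2) ^ 2 - (t0/2) ^ 2)
        = 1 / (2 * t0) * Real.tanh (t0 / 2) / 2 * (t ^ 2 - t0 ^ 2) := by
      field_simp
    rw [h2] at h
    linarith

/-- The penalized weighted observed log-likelihood
pℓ(β) = Σᵢ sᵢ[yᵢ xᵢᵀβ − mᵢ log(1 + exp(xᵢᵀβ))] − P(β). -/
noncomputable def pLogLik (n p : ℕ) (x : Fin n → Fin p → ℝ) (s m y : Fin n → ℝ)
    (P : (Fin p → ℝ) → ℝ) (β : Fin p → ℝ) : ℝ :=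
  (∑ i, s i * (y i * (x i ⬝ᵥ β) - m i * Real.log (1 + Real.exp (x i ⬝ᵥ β)))) - P β

/-- The penalized Pólya-Gamma Q-function at current iterate βₜ:
Q(β) = Σᵢ sᵢ uᵢ xᵢᵀβ − (1/2) Σᵢ sᵢ ω(xᵢᵀβₜ, mᵢ)(xᵢᵀβ)² − P(β), with uᵢ = yᵢ − mᵢ/2. -/
noncomputable def Qfun (n p : ℕ) (x : Fin n → Fin p → ℝ) (s m y : Fin n → ℝ)
    (P : (Fin p → ℝ) → ℝ) (βt : Fin p → ℝ) (β : Fin p → ℝ) : ℝ :=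
  (∑ i, s i * (y i - m i / 2) * (x i ⬝ᵥ β))
    - (1 / 2) * (∑ i, s i * omegaPG (x i ⬝ᵥ βt) (m i) * (x i ⬝ᵥ β) ^ 2) - P β

/-- The PX-ECME update (EM update followed by an optimal scalar rescaling)
increases the penalized weighted log-likelihood at every iteration. -/
theorem pxecme_update_increases_penalized_loglik (n p : ℕ) (x : Fin n → Fin p → ℝ)
    (s m y : Fin n → ℝ) (hs : ∀ i, 0 ≤ s i) (hm : ∀ i, 0 ≤ m i)
    (P : (Fin p → ℝ) → ℝ) (βt β' : Fin p → ℝ) (ρ' : ℝ)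
    (hmax : ∀ β : Fin p → ℝ, Qfun n p x s m y P βt β ≤ Qfun n p x s m y P βt β')
    (hρ : ∀ ρ : ℝ, pLogLik n p x s m y P (ρ • β') ≤ pLogLik n p x s m y P (ρ' • β')) :
    pLogLik n p x s m y P (ρ' • β') ≥ pLogLik n p x s m y P β' ∧
      pLogLik n p x s m y P β' ≥ pLogLik n p x s m y P βt := by
  -- the constant C in the minorization pℓ(β) ≥ Q(β) + C
  set C : ℝ := ∑ i, s i * (m i * (x i ⬝ᵥ βt) / 2
      + (1/2) * omegaPG (x i ⬝ᵥ βt) (m i) * (x i ⬝ᵥ βt) ^ 2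
      - m i * Real.log (1 + Real.exp (x i ⬝ᵥ βt))) with hC
  -- minorization
  have hminor : ∀ β : Fin p → ℝ,
      Qfun n p x s m y P βt β + C ≤ pLogLik n p x s m y P β := by
    intro β
    unfold Qfun pLogLik
    rw [Finset.mul_sum]
    rw [← Finset.sum_sub_distrib]
    have hcomb : (∑ i, (s i * (y i - m i / 2) * (x i ⬝ᵥ β)
        - 1 / 2 * (s i * omegaPG (x i ⬝ᵥ βt) (m i) * (x i ⬝ᵥ β) ^ 2))) - P β + C
        = (∑ i, (s i * (y i - m i / 2) * (x i ⬝ᵥ β)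
        - 1 / 2 * (s i * omegaPG (x i ⬝ᵥ βt) (m i) * (x i ⬝ᵥ β) ^ 2)
        + s i * (m i * (x i ⬝ᵥ βt) / 2
          + (1/2) * omegaPG (x i ⬝ᵥ βt) (m i) * (x i ⬝ᵥ βt) ^ 2
          - m i * Real.log (1 + Real.exp (x i ⬝ᵥ βt))))) - P β := by
      rw [hC, Finset.sum_add_distrib]
      ring
    rw [hcomb]
    apply sub_le_sub_right
    apply Finset.sum_le_sum
    intro i _
    set t : ℝ := x i ⬝ᵥ β
    set t0 : ℝ := x i ⬝ᵥ βt
    set M : ℝ := m i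
    have hMb : M * Real.log (1 + Real.exp t) ≤ M * Real.log (1 + Real.exp t0)
        + M * ((t - t0) / 2) + omegaPG t0 M / 2 * (t ^ 2 - t0 ^ 2) := by
      have := mul_le_mul_of_nonneg_left (logistic_bound t t0) (hm i)
      rw [omegaPG_eq_mul t0 M]
      nlinarith [this]
    have hsb := mul_le_mul_of_nonneg_left hMb (hs i)
    nlinarith [hsb]
  -- equality at βt
  have heq : Qfun n p x s m y P βt βt + C = pLogLik n p x s m y P βt := by
    unfold Qfun pLogLik
    rw [hC, Finset.mul_sum, ← Finset.sum_sub_distrib]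
    have : (∑ i, (s i * (y i - m i / 2) * (x i ⬝ᵥ βt)
        - 1 / 2 * (s i * omegaPG (x i ⬝ᵥ βt) (m i) * (x i ⬝ᵥ βt) ^ 2)))
        + (∑ i, s i * (m i * (x i ⬝ᵥ βt) / 2
          + (1/2) * omegaPG (x i ⬝ᵥ βt) (m i) * (x i ⬝ᵥ βt) ^ 2
          - m i * Real.log (1 + Real.exp (x i ⬝ᵥ βt))))
        = ∑ i, s i * (y i * (x i ⬝ᵥ βt) - m i * Real.log (1 + Real.exp (x i ⬝ᵥ βt))) := by
      rw [← Finset.sum_add_distrib]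
      apply Finset.sum_congr rfl
      intro i _
      ring
    linarith [this]
  constructor
  · have h1 := hρ 1
    rwa [one_smul] at h1
  · calc pLogLik n p x s m y P β' ≥ Qfun n p x s m y P βt β' + C := hminor β'
      _ ≥ Qfun n p x s m y P βt βt + C := by linarith [hmax βt]
      _ = pLogLik n p x s m y P βt := heq
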